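/- (Order–degree–height surface for rational-case creative telescoping; operator core.) Let u ∈ C[x,y] be nonzero. For i = 1, …, s let V_i = Σ_{j=0}^{ρ_i} (v_{i,j}·)∘S_x^j with v_{i,j} ∈ C[x,y], deg_x v_{i,j} ≤ θ_i and deg_y v_{i,j} ≤ τ_i, and let a'_1, …, a'_s be positive integers. Let r, d, h ∈ ℕ be such that d ≥ deg_x u, h ≥ deg_y u, a'_i ≤ r + ρ_i + 1 for all i, and (r+1)(d+1−deg_x u)(h+1−deg_y u) − Σ_{i=1}^{s} a'_i·θ_i·τ_i − (d+1−deg_x u)·Σ_{i=1}^{s} a'_i·τ_i − (h+1−deg_y u)·Σ_{i=1}^{s} a'_i·θ_i − (d+1−deg_x u)(h+1−deg_y u)·Σ_{i=1}^{s} a'_i > 0. Then there exist polynomials c_0, …, c_r ∈ C[x,y], not all zero, with deg_x c_t ≤ d − deg_x u and deg_y c_t ≤ h − deg_y u, and for each i polynomials w_{i,0}, …, w_{i,r+ρ_i−a'_i} ∈ C[x,y] with deg_x w_{i,j} ≤ d − deg_x u + θ_i and deg_y w_{i,j} ≤ h − deg_y u + τ_i, such that for every i the identity (Σ_{t=0}^{r}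 (c_t·)∘S_x^t) ∘ V_i = (Σ_{j=0}^{r+ρ_i−a'_i} (w_{i,j}·)∘S_x^j) ∘ (S_x^{a'_i} − id) holds as C-linear endomorphisms of C[x,y]. -/

import Mathlib

open MvPolynomial

/-- The shift `S_x` on `C[x,y]`: the `C`-algebra endomorphism (in fact automorphism)
with `x ↦ x + 1` and `y ↦ y`. -/
noncomputable def shiftX (C : Type*) [CommRing C] :
    MvPolynomial (Fin 2) C →ₐ[C] MvPolynomial (Fin 2) C :=
  aeval ![X 0 + 1, X 1]


section Aux
variable {C : Type*} [CommRing C]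

local notation "P2" => MvPolynomial (Fin 2) C

lemma degreeOf_one' (n : Fin 2) : degreeOf n (1 : P2) = 0 := by
  simpa using degreeOf_C (1 : C) n

lemma degreeOf_sum_le' {α : Type*} (n : Fin 2) (s : Finset α) (f : α → P2) (B : ℕ)
    (hf : ∀ x ∈ s, degreeOf n (f x) ≤ B) : degreeOf n (∑ x ∈ s, f x) ≤ B := by
  classical
  induction s using Finset.induction_on with
  | empty => simp
  | insert _ _ hx ih =>
    rename_i a t
    rw [Finset.sum_insert hx]
    refine le_trans (degreeOf_add_le _ _ _) ?_
    exact sup_le (hf a (Finset.mem_insert_self a t))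
      (ih fun x hxt => hf x (Finset.mem_insert_of_mem hxt))

lemma degreeOf_pow_le' (n : Fin 2) (p : P2) (e : ℕ) :
    degreeOf n (p ^ e) ≤ e * degreeOf n p := by
  induction e with
  | zero => simp [pow_zero, degreeOf_one']
  | succ e ih =>
    rw [pow_succ]
    refine le_trans (degreeOf_mul_le _ _ _) ?_
    calc degreeOf n (p ^ e) + degreeOf n p ≤ e * degreeOf n p + degreeOf n p := by omega
    _ = (e + 1) * degreeOf n p := by ring

lemma degreeOf_monomial_le' (n : Fin 2) (m : Fin 2 →₀ ℕ) (a : C) :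
    degreeOf n (monomial m a) ≤ m n := by
  classical
  rw [degreeOf_le_iff]
  intro m' hm'
  rw [support_monomial] at hm'
  split at hm' <;> simp_all

lemma degreeOf_vec_le [Nontrivial C] (n i : Fin 2) :
    degreeOf n ((![X 0 + 1, X 1] : Fin 2 → P2) i) ≤ if n = i then 1 else 0 := by
  classical
  fin_cases i
  · show degreeOf n (X 0 + 1 : P2) ≤ _
    refine le_trans (degreeOf_add_le _ _ _) ?_
    rw [degreeOf_one', degreeOf_X]
    simp
  · show degreeOf n (X 1 : P2) ≤ if n = 1 then 1 else 0
    rw [degreeOf_X]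

lemma degreeOf_shiftX_le [Nontrivial C] (n : Fin 2) (p : P2) :
    degreeOf n (shiftX C p) ≤ degreeOf n p := by
  classical
  rw [shiftX, aeval_def, eval₂_eq]
  refine degreeOf_sum_le' n _ _ _ ?_
  intro m hm
  refine le_trans (degreeOf_mul_le _ _ _) ?_
  have h1 : degreeOf n ((algebraMap C P2) (coeff m p)) = 0 := degreeOf_C _ _
  have h2 : degreeOf n (∏ i ∈ m.support, (![X 0 + 1, X 1] : Fin 2 → P2) i ^ m i) ≤ m n := by
    have key : ∀ (s : Finset (Fin 2)),
        degreeOf n (∏ i ∈ s, (![X 0 + 1, X 1] : Fin 2 → P2) i ^ m i) ≤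
          ∑ i ∈ s, m i * (if n = i then 1 else 0) := by
      intro s
      induction s using Finset.induction_on with
      | empty => simp [degreeOf_one']
      | insert _ _ hx ih =>
        rename_i a t
        rw [Finset.prod_insert hx, Finset.sum_insert hx]
        refine le_trans (degreeOf_mul_le _ _ _) ?_
        have hpow : degreeOf n ((![X 0 + 1, X 1] : Fin 2 → P2) a ^ m a) ≤
            m a * (if n = a then 1 else 0) :=
          le_trans (degreeOf_pow_le' n _ (m a))
            (Nat.mul_le_mul_left _ (degreeOf_vec_le n a))
        omega
    refine le_trans (key m.support) ?_
    by_cases hn : n ∈ m.support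
    · rw [Finset.sum_eq_single n]
      · simp
      · intro b _ hbn; simp [if_neg (Ne.symm hbn)]
      · intro hnot; exact absurd hn hnot
    · have hmn0 : m n = 0 := Finsupp.notMem_support_iff.mp hn
      rw [hmn0]
      refine le_of_eq (Finset.sum_eq_zero ?_)
      intro i hi
      have : n ≠ i := fun he => hn (he ▸ hi)
      simp [if_neg this]
  have hmn : m n ≤ degreeOf n p := degreeOf_le_iff.mp le_rfl m hm
  omega

end Aux

section OpAux
variable {R : Type*} [Ring R]

/-- Geometric-series factorization in a ring. -/
lemma pow_sub_pow_factor (x : R) (m a q : ℕ) :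
    x ^ (m + q * a) - x ^ m = (∑ l ∈ Finset.range q, x ^ (m + l * a)) * (x ^ a - 1) := by
  induction q with
  | zero => simp
  | succ q ih =>
    rw [Finset.sum_range_succ,
      add_mul (∑ l ∈ Finset.range q, x ^ (m + l * a)) (x ^ (m + q * a)) (x ^ a - 1), ← ih]
    have h1 : x ^ (m + (q + 1) * a) = x ^ (m + q * a) * x ^ a := by
      rw [← pow_add]; ring_nf
    rw [h1, mul_sub, mul_one]
    abel

/-- collect double sum by total degree -/
lemma sum_collect {M : Type*} [AddCommMonoid M] (R1 R2 : ℕ) (g : ℕ → ℕ → M) :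
    ∑ t ∈ Finset.range (R1 + 1), ∑ j ∈ Finset.range (R2 + 1), g t j
    = ∑ k ∈ Finset.range (R1 + R2 + 1), ∑ t ∈ Finset.range (R1 + 1),
        ∑ j ∈ Finset.range (R2 + 1), if t + j = k then g t j else 0 := by
  classical
  symm
  rw [Finset.sum_comm]
  refine Finset.sum_congr rfl fun t ht => ?_
  rw [Finset.sum_comm]
  refine Finset.sum_congr rfl fun j hj => ?_
  rw [Finset.sum_ite_eq (Finset.range (R1 + R2 + 1)) (t + j) (fun _ => g t j), if_pos]
  simp only [Finset.mem_range] at ht hj ⊢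
  omega

end OpAux

section Op
variable {C : Type*} [CommRing C]

local notation "P2" => MvPolynomial (Fin 2) C
local notation "E2" => Module.End C (MvPolynomial (Fin 2) C)


noncomputable abbrev σop (C : Type*) [CommRing C] : Module.End C (MvPolynomial (Fin 2) C) :=
  (shiftX C).toLinearMap

noncomputable abbrev mulL (p : P2) : E2 := LinearMap.mulLeft C p

lemma mulL_mul (p q : P2) : (mulL (p * q) : E2) = mulL p * mulL q := by
  ext x
  simp [mulL, Module.End.mul_apply, mul_assoc]

lemma mulL_zero : (mulL 0 : E2) = 0 := by ext x; simp [mulL]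

lemma mulL_add (p q : P2) : (mulL (p + q) : E2) = mulL p + mulL q := by
  ext x; simp [mulL, add_mul]

lemma mulL_sum {α : Type*} (s : Finset α) (f : α → P2) :
    (mulL (∑ x ∈ s, f x) : E2) = ∑ x ∈ s, mulL (f x) := by
  classical
  induction s using Finset.induction_on with
  | empty => simpa using mulL_zero
  | insert _ _ hx ih => rename_i a t; rw [Finset.sum_insert hx, Finset.sum_insert hx, mulL_add, ih]

lemma σ_mulL (p : P2) : σop C * mulL p = mulL (shiftX C p) * σop C := by
  ext q
  simp [σop, mulL, Module.End.mul_apply, map_mul]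

lemma σpow_mulL (t : ℕ) (p : P2) :
    σop C ^ t * mulL p = mulL ((σop C ^ t) p) * σop C ^ t := by
  induction t with
  | zero => simp
  | succ t ih =>
    rw [pow_succ', mul_assoc, ih, ← mul_assoc, σ_mulL, mul_assoc, ← pow_succ']
    congr 2
    simp [σop, Module.End.mul_apply, pow_succ']

/-- product expansion of two shift operators -/
lemma expand_op (c v : ℕ → P2) (R1 R2 : ℕ) :
    (∑ t ∈ Finset.range (R1 + 1), mulL (c t) * σop C ^ t) *
      (∑ j ∈ Finset.range (R2 + 1), mulL (v j) * σop C ^ j)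
    = ∑ k ∈ Finset.range (R1 + R2 + 1),
        mulL (∑ t ∈ Finset.range (R1 + 1), ∑ j ∈ Finset.range (R2 + 1),
          if t + j = k then c t * (σop C ^ t) (v j) else 0) * σop C ^ k := by
  classical
  rw [Finset.sum_mul_sum]
  have step : ∀ t j, (mulL (c t) * σop C ^ t) * (mulL (v j) * σop C ^ j)
      = mulL (c t * (σop C ^ t) (v j)) * σop C ^ (t + j) := by
    intro t j
    rw [mul_assoc, ← mul_assoc (σop C ^ t), σpow_mulL, mulL_mul, pow_add]
    simp [mul_assoc]
  simp only [step]
  rw [sum_collect R1 R2 (fun t j => mulL (c t * (σop C ^ t) (v j)) * σop C ^ (t + j))]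
  refine Finset.sum_congr rfl ?_
  intro k hk
  rw [mulL_sum, Finset.sum_mul]
  refine Finset.sum_congr rfl ?_
  intro t _
  rw [mulL_sum, Finset.sum_mul]
  refine Finset.sum_congr rfl ?_
  intro j _
  by_cases hkt : t + j = k
  · rw [if_pos hkt, if_pos hkt, hkt]
  · rw [if_neg hkt, if_neg hkt, mulL_zero, zero_mul]

/-- right division by σ^a − 1 given residue conditions -/
lemma divide_op (P : ℕ → P2) (N a : ℕ) (ha : 0 < a)
    (hres : ∀ m < a, ∑ k ∈ (Finset.range N).filter (fun k => k % a = m), P k = 0) :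
    ∑ k ∈ Finset.range N, mulL (P k) * σop C ^ k
    = (∑ j ∈ Finset.range (N - a),
        mulL (∑ k ∈ Finset.range N, if j + a ≤ k ∧ a ∣ k - j then P k else 0) * σop C ^ j) *
      (σop C ^ a - 1) := by
  classical
  -- Step 1: split LHS
  have split : ∀ k, (σop C ^ k : E2) = (σop C ^ k - σop C ^ (k % a)) + σop C ^ (k % a) := by
    intro k; abel
  have lhs_eq : ∑ k ∈ Finset.range N, mulL (P k) * σop C ^ k
      = ∑ k ∈ Finset.range N, mulL (P k) * (σop C ^ k - σop C ^ (k % a))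
        + ∑ k ∈ Finset.range N, mulL (P k) * σop C ^ (k % a) := by
    rw [← Finset.sum_add_distrib]
    refine Finset.sum_congr rfl fun k _ => ?_
    rw [← mul_add, ← split]
  -- Step 2: second sum vanishes
  have second : ∑ k ∈ Finset.range N, mulL (P k) * σop C ^ (k % a) = 0 := by
    have : ∑ k ∈ Finset.range N, mulL (P k) * σop C ^ (k % a)
        = ∑ m ∈ Finset.range a, ∑ k ∈ (Finset.range N).filter (fun k => k % a = m),
            mulL (P k) * σop C ^ (k % a) := by
      have hmap : ∀ k ∈ Finset.range N, k % a ∈ Finset.range a :=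
        fun k _ => Finset.mem_range.mpr (Nat.mod_lt k ha)
      rw [← Finset.sum_fiberwise_of_maps_to hmap (fun k => mulL (P k) * σop C ^ (k % a))]
    rw [this]
    refine Finset.sum_eq_zero fun m hm => ?_
    have : ∀ k ∈ (Finset.range N).filter (fun k => k % a = m),
        mulL (P k) * σop C ^ (k % a) = mulL (P k) * σop C ^ m := by
      intro k hk
      rw [Finset.mem_filter] at hk
      rw [hk.2]
    rw [Finset.sum_congr rfl this, ← Finset.sum_mul, ← mulL_sum,
      hres m (Finset.mem_range.mp hm), mulL_zero, zero_mul]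
  -- Step 3: first sum factors
  have first : ∑ k ∈ Finset.range N, mulL (P k) * (σop C ^ k - σop C ^ (k % a))
      = (∑ k ∈ Finset.range N, ∑ j ∈ Finset.range N,
          if j + a ≤ k ∧ a ∣ k - j then mulL (P k) * σop C ^ j else 0) * (σop C ^ a - 1) := by
    rw [Finset.sum_mul]
    refine Finset.sum_congr rfl fun k hk => ?_
    have hkdecomp : k % a + (k / a) * a = k := Nat.mod_add_div' k a
    have factor := pow_sub_pow_factor (σop C) (k % a) a (k / a)
    rw [hkdecomp] at factor
    rw [factor, ← mul_assoc, Finset.mul_sum]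
    congr 1
    -- reindex inner sum over l∈range (k/a) ↔ filtered j
    have key : ∑ j ∈ Finset.range N, (if j + a ≤ k ∧ a ∣ k - j then mulL (P k) * σop C ^ j else 0)
        = ∑ l ∈ Finset.range (k / a), mulL (P k) * σop C ^ (k % a + l * a) := by
      rw [← Finset.sum_filter]
      refine Finset.sum_nbij' (fun j => j / a) (fun l => k % a + l * a) ?_ ?_ ?_ ?_ ?_
      · intro j hj
        simp only [Finset.mem_filter, Finset.mem_range] at hj
        obtain ⟨hjN, hjk, hdvd⟩ := hj
        simp only [Finset.mem_range]
        have hmod : j % a = k % a := by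
          obtain ⟨q, hq⟩ := hdvd
          have hk' : k = j + a * q := by omega
          rw [hk', mul_comm a q, Nat.add_mul_mod_self_right]
        have hjd : j % a + j / a * a = j := Nat.mod_add_div' j a
        have h3 : j / a * a + a ≤ k / a * a := by omega
        by_contra hc
        push_neg at hc
        have := Nat.mul_le_mul_right a hc
        omega
      · intro l hl
        simp only [Finset.mem_range] at hl
        simp only [Finset.mem_filter, Finset.mem_range]
        have hla : (l + 1) * a ≤ k / a * a := Nat.mul_le_mul_right a hl
        have h1 : k % a + l * a + a ≤ k := by
          have := hkdecomp
          nlinarith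
        have hkN : k < N := Finset.mem_range.mp hk
        refine ⟨by omega, h1, ?_⟩
        have heq : k - (k % a + l * a) = (k / a - l) * a := by
          rw [Nat.sub_mul]
          omega
        exact ⟨k / a - l, by rw [heq]; ring⟩
      · intro j hj
        simp only [Finset.mem_filter, Finset.mem_range] at hj
        obtain ⟨hjN, hjk, hdvd⟩ := hj
        have hmod : j % a = k % a := by
          obtain ⟨q, hq⟩ := hdvd
          have hk' : k = j + a * q := by omega
          rw [hk', mul_comm a q, Nat.add_mul_mod_self_right]
        show k % a + j / a * a = j
        rw [← hmod, Nat.mod_add_div']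
      · intro l hl
        simp only [Finset.mem_range] at hl
        show (k % a + l * a) / a = l
        rw [Nat.add_mul_div_right _ _ ha, Nat.div_eq_of_lt (Nat.mod_lt k ha)]
        omega
      · intro j hj
        simp only [Finset.mem_filter, Finset.mem_range] at hj
        obtain ⟨hjN, hjk, hdvd⟩ := hj
        have hmod : j % a = k % a := by
          obtain ⟨q, hq⟩ := hdvd
          have hk' : k = j + a * q := by omega
          rw [hk', mul_comm a q, Nat.add_mul_mod_self_right]
        have hj' : k % a + j / a * a = j := by rw [← hmod, Nat.mod_add_div']
        rw [hj']
    exact key.symm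
  rw [lhs_eq, second, add_zero, first]
  congr 1
  -- Step 4: swap sums and restrict range
  rw [Finset.sum_comm]
  have truncate : ∀ j ∈ Finset.range N, j ∉ Finset.range (N - a) →
      ∑ k ∈ Finset.range N, (if j + a ≤ k ∧ a ∣ k - j then mulL (P k) * σop C ^ j else 0) = 0 := by
    intro j _ hj2
    simp only [Finset.mem_range, not_lt] at hj2
    refine Finset.sum_eq_zero fun k hk => ?_
    simp only [Finset.mem_range] at hk
    rw [if_neg]
    rintro ⟨h1, -⟩
    omega
  rw [← Finset.sum_subset (Finset.range_subset_range.mpr (Nat.sub_le N a)) truncate]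
  refine Finset.sum_congr rfl fun j _ => ?_
  rw [mulL_sum, Finset.sum_mul]
  refine Finset.sum_congr rfl fun k _ => ?_
  by_cases hc : j + a ≤ k ∧ a ∣ k - j
  · rw [if_pos hc, if_pos hc]
  · rw [if_neg hc, if_neg hc, mulL_zero, zero_mul]

end Op


section Aux3
variable {C : Type*} [CommRing C]

local notation "P2" => MvPolynomial (Fin 2) C

lemma degreeOf_σpow_le [Nontrivial C] (n : Fin 2) (t : ℕ) (p : P2) :
    degreeOf n ((σop C ^ t) p) ≤ degreeOf n p := by
  induction t generalizing p with
  | zero => simp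
  | succ t ih =>
    rw [pow_succ, Module.End.mul_apply]
    exact le_trans (ih _) (degreeOf_shiftX_le n p)

noncomputable def monXY (C : Type*) [CommRing C] (α β : ℕ) : MvPolynomial (Fin 2) C :=
  monomial (Finsupp.single 0 α + Finsupp.single 1 β) (1 : C)

lemma expXY_apply0 (α β : ℕ) :
    (Finsupp.single (0 : Fin 2) α + Finsupp.single 1 β : Fin 2 →₀ ℕ) 0 = α := by
  simp [Finsupp.single_apply]

lemma expXY_apply1 (α β : ℕ) :
    (Finsupp.single (0 : Fin 2) α + Finsupp.single 1 β : Fin 2 →₀ ℕ) 1 = β := by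
  simp [Finsupp.single_apply]

lemma expXY_inj {α β α' β' : ℕ}
    (hE : Finsupp.single (0 : Fin 2) α + Finsupp.single 1 β
        = Finsupp.single (0 : Fin 2) α' + Finsupp.single 1 β') : α = α' ∧ β = β' := by
  constructor
  · have := congrArg (fun f : Fin 2 →₀ ℕ => f 0) hE
    simpa [expXY_apply0] using this
  · have := congrArg (fun f : Fin 2 →₀ ℕ => f 1) hE
    simpa [expXY_apply1] using this

lemma finsupp_fin2_eq (m : Fin 2 →₀ ℕ) :
    m = Finsupp.single 0 (m 0) + Finsupp.single 1 (m 1) := by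
  ext i
  fin_cases i
  · simp [expXY_apply0]
  · simp [expXY_apply1]

lemma eq_zero_of_box (p : P2) (A B : ℕ) (hA : degreeOf 0 p ≤ A) (hB : degreeOf 1 p ≤ B)
    (hc : ∀ α ≤ A, ∀ β ≤ B,
      coeff (Finsupp.single 0 α + Finsupp.single 1 β) p = 0) : p = 0 := by
  classical
  apply MvPolynomial.eq_zero_iff.mpr
  intro m
  by_contra hm
  have hsup : m ∈ p.support := MvPolynomial.mem_support_iff.mpr hm
  have h0 : m 0 ≤ A := le_trans (degreeOf_le_iff.mp le_rfl m hsup) hA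
  have h1 : m 1 ≤ B := le_trans (degreeOf_le_iff.mp le_rfl m hsup) hB
  have := hc (m 0) h0 (m 1) h1
  rw [← finsupp_fin2_eq m] at this
  exact hm this

end Aux3

/-- Order–degree–height surface for rational-case creative telescoping (operator core,
Theorem 3 of the paper): given `u ∈ C[x,y] \ {0}`, shift operators
`V_i = Σ_j (v_{i,j}·)∘S_x^j` of order `ρ_i`, degree `≤ θ_i`, height `≤ τ_i`, and positive
integers `a'_i`, if `(r,d,h)` satisfies the stated inequality then there is a nonzero
operator `Σ_t (c_t·)∘S_x^t` with `deg_x c_t ≤ d − deg_x u`, `deg_y c_t ≤ h − deg_y u` such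
that for each `i` it satisfies `(Σ_t (c_t·)∘S_x^t) ∘ V_i = R_i ∘ (S_x^{a'_i} − id)` for an
operator `R_i` of order `r + ρ_i − a'_i`, degree `≤ d − deg_x u + θ_i`, and height
`≤ h − deg_y u + τ_i`. -/
theorem rational_telescoping_order_degree_height
    (C : Type*) [Field C] [CharZero C] (s : ℕ)
    (u : MvPolynomial (Fin 2) C) (hu : u ≠ 0)
    (ρ θ τ : Fin s → ℕ)
    (vv : Fin s → ℕ → MvPolynomial (Fin 2) C)
    (hvd : ∀ i, ∀ j ≤ ρ i, degreeOf 0 (vv i j) ≤ θ i)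
    (hvh : ∀ i, ∀ j ≤ ρ i, degreeOf 1 (vv i j) ≤ τ i)
    (a' : Fin s → ℕ) (ha' : ∀ i, 0 < a' i)
    (r d h : ℕ)
    (hdu : degreeOf 0 u ≤ d) (hhu : degreeOf 1 u ≤ h)
    (ha'le : ∀ i, a' i ≤ r + ρ i + 1)
    (hineq :
      ((r : ℤ) + 1) * ((d : ℤ) + 1 - degreeOf 0 u) * ((h : ℤ) + 1 - degreeOf 1 u)
        - (∑ i, (a' i : ℤ) * (θ i : ℤ) * (τ i : ℤ))
        - ((d : ℤ) + 1 - degreeOf 0 u) * (∑ i, (a' i : ℤ) * (τ i : ℤ))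
        - ((h : ℤ) + 1 - degreeOf 1 u) * (∑ i, (a' i : ℤ) * (θ i : ℤ))
        - ((d : ℤ) + 1 - degreeOf 0 u) * ((h : ℤ) + 1 - degreeOf 1 u) * (∑ i, (a' i : ℤ))
        > 0) :
    ∃ (c : ℕ → MvPolynomial (Fin 2) C) (w : Fin s → ℕ → MvPolynomial (Fin 2) C),
      (¬ ∀ t ≤ r, c t = 0) ∧
      (∀ t ≤ r, degreeOf 0 (c t) ≤ d - degreeOf 0 u ∧ degreeOf 1 (c t) ≤ h - degreeOf 1 u) ∧
      (∀ i, ∀ j ≤ r + ρ i - a' i,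
        degreeOf 0 (w i j) ≤ d - degreeOf 0 u + θ i ∧
        degreeOf 1 (w i j) ≤ h - degreeOf 1 u + τ i) ∧
      (∀ i,
        (∑ t ∈ Finset.range (r + 1),
            (LinearMap.mulLeft C (c t)) ∘ₗ
              (((shiftX C).toLinearMap :
                  Module.End C (MvPolynomial (Fin 2) C)) ^ t)) ∘ₗ
          (∑ j ∈ Finset.range (ρ i + 1),
            (LinearMap.mulLeft C (vv i j)) ∘ₗ
              (((shiftX C).toLinearMap :
                  Module.End C (MvPolynomial (Fin 2) C)) ^ j)) =
        (∑ j ∈ Finset.range (r + ρ i + 1 - a' i),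
            (LinearMap.mulLeft C (w i j)) ∘ₗ
              (((shiftX C).toLinearMap :
                  Module.End C (MvPolynomial (Fin 2) C)) ^ j)) ∘ₗ
          ((((shiftX C).toLinearMap :
              Module.End C (MvPolynomial (Fin 2) C)) ^ (a' i)) - 1)) := by
  classical
  set du := degreeOf 0 u with hdu_def
  set eu := degreeOf 1 u with heu_def
  set D := d + 1 - du with hD_def
  set Hh := h + 1 - eu with hH_def
  have hD1 : 1 ≤ D := by omega
  have hH1 : 1 ≤ Hh := by omega
  -- source and target index types
  set ι := (Fin (r + 1) × Fin D × Fin Hh : Type) with hι_def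
  set κT := ((i : Fin s) × (Fin (a' i) × Fin (D + θ i) × Fin (Hh + τ i)) : Type) with hκ_def
  -- the candidate-coefficient linear maps
  set cL : Fin (r + 1) → ((ι → C) →ₗ[C] MvPolynomial (Fin 2) C) := fun t =>
    ∑ q : Fin D × Fin Hh,
      (LinearMap.toSpanSingleton C (MvPolynomial (Fin 2) C) (monXY C q.1 q.2)) ∘ₗ
        (LinearMap.proj (R := C) (φ := fun _ : ι => C) (⟨t, q.1, q.2⟩ : ι)) with hcL_def
  have hcL : ∀ t (e : ι → C),
      cL t e = ∑ q : Fin D × Fin Hh, e (t, q.1, q.2) • monXY C q.1 q.2 := by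
    intro t e
    simp [hcL_def, LinearMap.sum_apply, LinearMap.toSpanSingleton_apply]
  have hcoeff : ∀ t (e : ι → C) (α : Fin D) (β : Fin Hh),
      coeff (Finsupp.single 0 (α : ℕ) + Finsupp.single 1 (β : ℕ)) (cL t e) = e (t, α, β) := by
    intro t e α β
    rw [hcL]
    rw [MvPolynomial.coeff_sum]
    rw [Finset.sum_eq_single (α, β)]
    · simp [monXY, coeff_smul, coeff_monomial]
    · rintro ⟨α', β'⟩ - hne
      simp only [monXY, coeff_smul, coeff_monomial, smul_eq_mul]
      rw [if_neg, mul_zero]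
      intro hEq
      obtain ⟨h1, h2⟩ := expXY_inj hEq
      exact hne (Prod.ext (Fin.ext h1) (Fin.ext h2))
    · intro habs; exact absurd (Finset.mem_univ _) habs
  have hcdeg0 : ∀ t (e : ι → C), degreeOf 0 (cL t e) ≤ D - 1 := by
    intro t e
    rw [hcL]
    refine degreeOf_sum_le' _ _ _ _ ?_
    rintro ⟨α, β⟩ -
    rw [monXY, MvPolynomial.smul_monomial]
    refine le_trans (degreeOf_monomial_le' _ _ _) ?_
    rw [expXY_apply0]
    have := α.isLt
    omega
  have hcdeg1 : ∀ t (e : ι → C), degreeOf 1 (cL t e) ≤ Hh - 1 := by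
    intro t e
    rw [hcL]
    refine degreeOf_sum_le' _ _ _ _ ?_
    rintro ⟨α, β⟩ -
    rw [monXY, MvPolynomial.smul_monomial]
    refine le_trans (degreeOf_monomial_le' _ _ _) ?_
    rw [expXY_apply1]
    have := β.isLt
    omega
  -- the equation maps
  set pL : Fin s → ℕ → ((ι → C) →ₗ[C] MvPolynomial (Fin 2) C) := fun i k =>
    ∑ t : Fin (r + 1), ∑ j ∈ Finset.range (ρ i + 1),
      if (t : ℕ) + j = k then
        (LinearMap.mulRight C ((σop C ^ (t : ℕ)) (vv i j))) ∘ₗ cL t else 0 with hpL_def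
  set EL : Fin s → ℕ → ((ι → C) →ₗ[C] MvPolynomial (Fin 2) C) := fun i m =>
    ∑ k ∈ (Finset.range (r + ρ i + 1)).filter (fun k => k % a' i = m), pL i k with hEL_def
  set Ψ : (ι → C) →ₗ[C] (κT → C) := LinearMap.pi fun x =>
    (lcoeff C (Finsupp.single 0 (x.2.2.1 : ℕ) + Finsupp.single 1 (x.2.2.2 : ℕ))) ∘ₗ
      EL x.1 (x.2.1 : ℕ) with hΨ_def
  -- cardinality comparison
  have hcard : Fintype.card κT < Fintype.card ι := by
    have hDz : (D : ℤ) = (d : ℤ) + 1 - (du : ℤ) := by omega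
    have hHz : (Hh : ℤ) = (h : ℤ) + 1 - (eu : ℤ) := by omega
    rw [← hDz, ← hHz] at hineq
    have key : ∑ i, ((a' i : ℤ) * (((D : ℤ) + θ i) * ((Hh : ℤ) + τ i)))
        = (∑ i, (a' i : ℤ) * θ i * τ i) + (D : ℤ) * (∑ i, (a' i : ℤ) * τ i)
          + (Hh : ℤ) * (∑ i, (a' i : ℤ) * θ i) + (D : ℤ) * (Hh : ℤ) * (∑ i, (a' i : ℤ)) := by
      rw [Finset.mul_sum, Finset.mul_sum, Finset.mul_sum, ← Finset.sum_add_distrib,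
        ← Finset.sum_add_distrib, ← Finset.sum_add_distrib]
      exact Finset.sum_congr rfl fun i _ => by ring
    have hZ : (∑ i, ((a' i : ℤ) * (((D : ℤ) + θ i) * ((Hh : ℤ) + τ i))))
        < ((r : ℤ) + 1) * D * Hh := by
      rw [key]; linarith [hineq]
    have hcards : Fintype.card κT = ∑ i, a' i * ((D + θ i) * (Hh + τ i)) := by
      show Fintype.card ((i : Fin s) × (Fin (a' i) × Fin (D + θ i) × Fin (Hh + τ i))) = _
      simp [Fintype.card_sigma, Fintype.card_prod]
    have hcardι : Fintype.card ι = (r + 1) * (D * Hh) := by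
      show Fintype.card (Fin (r + 1) × Fin D × Fin Hh) = _
      simp [Fintype.card_prod]
    rw [hcards, hcardι]
    have hfin : ((∑ i, a' i * ((D + θ i) * (Hh + τ i)) : ℕ) : ℤ)
        < (((r + 1) * (D * Hh) : ℕ) : ℤ) := by
      push_cast
      linarith [hZ]
    exact_mod_cast hfin
  -- nontrivial kernel element
  have hnotinj : ¬ Function.Injective Ψ := by
    intro hinj
    have h1 := LinearMap.finrank_le_finrank_of_injective hinj
    rw [Module.finrank_fintype_fun_eq_card, Module.finrank_fintype_fun_eq_card] at h1
    omega
  have hker : LinearMap.ker Ψ ≠ ⊥ := fun hbot => hnotinj (LinearMap.ker_eq_bot.mp hbot)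
  obtain ⟨e, heker, hene⟩ := (Submodule.ne_bot_iff _).mp hker
  have hΨe : Ψ e = 0 := heker
  -- the chosen coefficients
  set cc : ℕ → MvPolynomial (Fin 2) C :=
    fun t => if ht : t < r + 1 then cL ⟨t, ht⟩ e else 0 with hcc_def
  have hccdeg0 : ∀ t, degreeOf 0 (cc t) ≤ d - du := by
    intro t
    simp only [hcc_def]
    by_cases ht : t < r + 1
    · rw [dif_pos ht]
      have := hcdeg0 ⟨t, ht⟩ e
      omega
    · rw [dif_neg ht]; simp
  have hccdeg1 : ∀ t, degreeOf 1 (cc t) ≤ h - eu := by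
    intro t
    simp only [hcc_def]
    by_cases ht : t < r + 1
    · rw [dif_pos ht]
      have := hcdeg1 ⟨t, ht⟩ e
      omega
    · rw [dif_neg ht]; simp
  -- the coefficients of the product operator
  have hpLe : ∀ i k, pL i k e
      = ∑ t ∈ Finset.range (r + 1), ∑ j ∈ Finset.range (ρ i + 1),
          if t + j = k then cc t * (σop C ^ t) (vv i j) else 0 := by
    intro i k
    simp only [hpL_def]
    rw [LinearMap.sum_apply]
    rw [← Fin.sum_univ_eq_sum_range (fun t => ∑ j ∈ Finset.range (ρ i + 1),
      if t + j = k then cc t * (σop C ^ t) (vv i j) else 0) (r + 1)]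
    refine Finset.sum_congr rfl fun t _ => ?_
    rw [LinearMap.sum_apply]
    refine Finset.sum_congr rfl fun j _ => ?_
    by_cases hc : (t : ℕ) + j = k
    · rw [if_pos hc, if_pos hc]
      have hcct : cc (t : ℕ) = cL t e := by
        simp only [hcc_def]
        rw [dif_pos t.isLt]
      rw [LinearMap.comp_apply, LinearMap.mulRight_apply, hcct]
    · rw [if_neg hc, if_neg hc, LinearMap.zero_apply]
  -- degree bounds for the product coefficients
  have hPdeg0 : ∀ i k, degreeOf 0
      (∑ t ∈ Finset.range (r + 1), ∑ j ∈ Finset.range (ρ i + 1),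
        if t + j = k then cc t * (σop C ^ t) (vv i j) else 0) ≤ (d - du) + θ i := by
    intro i k
    refine degreeOf_sum_le' _ _ _ _ fun t _ => ?_
    refine degreeOf_sum_le' _ _ _ _ fun j hj => ?_
    by_cases hc : t + j = k
    · rw [if_pos hc]
      refine le_trans (degreeOf_mul_le _ _ _) ?_
      have h1 := hccdeg0 t
      have h2 : degreeOf 0 ((σop C ^ t) (vv i j)) ≤ θ i :=
        le_trans (degreeOf_σpow_le _ _ _) (hvd i j (by
          simp only [Finset.mem_range] at hj; omega))
      omega
    · rw [if_neg hc]; simp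
  have hPdeg1 : ∀ i k, degreeOf 1
      (∑ t ∈ Finset.range (r + 1), ∑ j ∈ Finset.range (ρ i + 1),
        if t + j = k then cc t * (σop C ^ t) (vv i j) else 0) ≤ (h - eu) + τ i := by
    intro i k
    refine degreeOf_sum_le' _ _ _ _ fun t _ => ?_
    refine degreeOf_sum_le' _ _ _ _ fun j hj => ?_
    by_cases hc : t + j = k
    · rw [if_pos hc]
      refine le_trans (degreeOf_mul_le _ _ _) ?_
      have h1 := hccdeg1 t
      have h2 : degreeOf 1 ((σop C ^ t) (vv i j)) ≤ τ i :=
        le_trans (degreeOf_σpow_le _ _ _) (hvh i j (by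
          simp only [Finset.mem_range] at hj; omega))
      omega
    · rw [if_neg hc]; simp
  -- the residue conditions
  have hres : ∀ i, ∀ m < a' i,
      ∑ k ∈ (Finset.range (r + ρ i + 1)).filter (fun k => k % a' i = m),
        (∑ t ∈ Finset.range (r + 1), ∑ j ∈ Finset.range (ρ i + 1),
          if t + j = k then cc t * (σop C ^ t) (vv i j) else 0) = 0 := by
    intro i m hm
    have hELe : EL i m e
        = ∑ k ∈ (Finset.range (r + ρ i + 1)).filter (fun k => k % a' i = m),
            (∑ t ∈ Finset.range (r + 1), ∑ j ∈ Finset.range (ρ i + 1),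
              if t + j = k then cc t * (σop C ^ t) (vv i j) else 0) := by
      simp only [hEL_def]
      rw [LinearMap.sum_apply]
      exact Finset.sum_congr rfl fun k _ => hpLe i k
    rw [← hELe]
    have hd0 : degreeOf 0 (EL i m e) ≤ (D - 1) + θ i := by
      rw [hELe]
      refine degreeOf_sum_le' _ _ _ _ fun k _ => ?_
      have := hPdeg0 i k
      omega
    have hd1 : degreeOf 1 (EL i m e) ≤ (Hh - 1) + τ i := by
      rw [hELe]
      refine degreeOf_sum_le' _ _ _ _ fun k _ => ?_
      have := hPdeg1 i k
      omega
    refine eq_zero_of_box _ ((D - 1) + θ i) ((Hh - 1) + τ i) hd0 hd1 ?_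
    intro α hα β hβ
    have hαlt : α < D + θ i := by omega
    have hβlt : β < Hh + τ i := by omega
    exact congrFun hΨe ⟨i, ⟨⟨m, hm⟩, ⟨α, hαlt⟩, ⟨β, hβlt⟩⟩⟩
  -- the chosen right factors
  set ww : Fin s → ℕ → MvPolynomial (Fin 2) C := fun i j =>
    ∑ k ∈ Finset.range (r + ρ i + 1),
      if j + a' i ≤ k ∧ a' i ∣ k - j then
        (∑ t ∈ Finset.range (r + 1), ∑ j' ∈ Finset.range (ρ i + 1),
          if t + j' = k then cc t * (σop C ^ t) (vv i j') else 0) else 0 with hww_def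
  refine ⟨cc, ww, ?_, ?_, ?_, ?_⟩
  · -- not all zero
    intro hall
    apply hene
    funext x
    obtain ⟨t, α, β⟩ := x
    have hct : cc (t : ℕ) = 0 := hall t (by have := t.isLt; omega)
    have hcLt : cL t e = 0 := by
      have hcct : cc (t : ℕ) = cL t e := by
        simp only [hcc_def]
        rw [dif_pos t.isLt]
      rw [← hcct, hct]
    have hc := hcoeff t e α β
    rw [hcLt] at hc
    simp only [MvPolynomial.coeff_zero] at hc
    exact hc.symm
  · -- degree bounds for c
    intro t _
    exact ⟨hccdeg0 t, hccdeg1 t⟩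
  · -- degree bounds for w
    intro i j _
    constructor
    · simp only [hww_def]
      refine degreeOf_sum_le' _ _ _ _ fun k _ => ?_
      by_cases hc : j + a' i ≤ k ∧ a' i ∣ k - j
      · rw [if_pos hc]; exact hPdeg0 i k
      · rw [if_neg hc]; simp
    · simp only [hww_def]
      refine degreeOf_sum_le' _ _ _ _ fun k _ => ?_
      by_cases hc : j + a' i ≤ k ∧ a' i ∣ k - j
      · rw [if_pos hc]; exact hPdeg1 i k
      · rw [if_neg hc]; simp
  · -- the operator identity
    intro i
    simp only [← Module.End.mul_eq_comp, hww_def]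
    have hexp := expand_op (C := C) cc (vv i) r (ρ i)
    have hdiv := divide_op (C := C)
      (fun k => ∑ t ∈ Finset.range (r + 1), ∑ j' ∈ Finset.range (ρ i + 1),
        if t + j' = k then cc t * (σop C ^ t) (vv i j') else 0)
      (r + ρ i + 1) (a' i) (ha' i) (hres i)
    exact hexp.trans hdiv
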